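/- For real z with |z| < 27/4, ∑_{n≥1} z^n / (n² · binom(3n, n)) = (2/3) · ∫_0^1 (−log(1 − z x² + z x³)) / (x(1−x)) dx. -/

import Mathlib

open MeasureTheory intervalIntegral

lemma beta_nat : ∀ (b a : ℕ), ∫ x in (0:ℝ)..1, x ^ a * (1 - x) ^ b =
    (a.factorial * b.factorial : ℝ) / (a + b + 1).factorial := by
  intro b
  induction b with
  | zero =>
    intro a
    have ha : ((a:ℝ)+1) ≠ 0 := by positivity
    have ha' : (a.factorial : ℝ) ≠ 0 := by positivity
    simp [integral_pow, Nat.factorial_succ]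
    field_simp
  | succ b ih =>
    intro a
    have ha : ((a:ℝ)+1) ≠ 0 := by positivity
    have hu : ∀ x ∈ Set.uIcc (0:ℝ) 1, HasDerivAt (fun x : ℝ => (1 - x) ^ (b + 1))
        (((b:ℝ)+1) * (1 - x) ^ b * (-1)) x := by
      intro x _
      have h1 : HasDerivAt (fun x : ℝ => 1 - x) (-1) x := (hasDerivAt_id x).const_sub 1
      simpa using h1.fun_pow (b + 1)
    have hv : ∀ x ∈ Set.uIcc (0:ℝ) 1, HasDerivAt (fun x : ℝ => x ^ (a + 1) / ((a:ℝ)+1))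
        (x ^ a) x := by
      intro x _
      have := (hasDerivAt_pow (a + 1) x).div_const ((a:ℝ)+1)
      refine this.congr_deriv ?_
      push_cast
      field_simp
    have hiu : IntervalIntegrable (fun x : ℝ => ((b:ℝ)+1) * (1 - x) ^ b * (-1)) volume 0 1 := by
      apply Continuous.intervalIntegrable; continuity
    have hiv : IntervalIntegrable (fun x : ℝ => x ^ a) volume 0 1 := by
      apply Continuous.intervalIntegrable; continuity
    have key := intervalIntegral.integral_mul_deriv_eq_deriv_mul hu hv hiu hiv
    have hcomm : ∫ x in (0:ℝ)..1, x ^ a * (1 - x) ^ (b+1)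
        = ∫ x in (0:ℝ)..1, (1 - x) ^ (b+1) * x ^ a := by
      congr 1; ext x; ring
    rw [hcomm, key]
    have : (fun x : ℝ => ((b:ℝ)+1) * (1 - x) ^ b * (-1) * (x ^ (a+1) / ((a:ℝ)+1)))
        = (fun x : ℝ => (-(((b:ℝ)+1) / ((a:ℝ)+1))) * (x ^ (a+1) * (1 - x) ^ b)) := by
      ext x; ring
    rw [this, intervalIntegral.integral_const_mul, ih (a+1)]
    have e1 : a + 1 + b + 1 = a + b + 2 := by omega
    have e2 : a + (b + 1) + 1 = a + b + 2 := by omega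
    rw [e1, e2, Nat.factorial_succ (a), Nat.factorial_succ b]
    have hf1 : ((a + b + 2).factorial : ℝ) ≠ 0 := by positivity
    push_cast
    field_simp
    ring

lemma cube_bound {x : ℝ} (hx0 : 0 ≤ x) (hx1 : x ≤ 1) : x ^ 2 * (1 - x) ≤ 4 / 27 := by
  nlinarith [sq_nonneg (3*x - 2), sq_nonneg x]

theorem stmt_13 (z : ℝ) (hz : |z| < 27 / 4) :
    ∑' n : ℕ, z ^ (n + 1) / ((n + 1) ^ 2 * (Nat.choose (3 * (n + 1)) (n + 1))) =
      (2 / 3) *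
        ∫ x in (0:ℝ)..1, (-Real.log (1 - z * x ^ 2 + z * x ^ 3)) / (x * (1 - x)) := by
  set f : ℕ → ℝ → ℝ := fun n x => z ^ (n+1) * (x ^ (2*n+1) * (1-x) ^ n) / (n+1) with hf
  have hr : |z| * (4/27) < 1 := by nlinarith [abs_nonneg z]
  have hr0 : 0 ≤ |z| * (4/27) := by positivity
  -- pointwise hasSum on Ioo
  have hsum : ∀ x ∈ Set.Ioo (0:ℝ) 1, HasSum (fun n => f n x)
      ((-Real.log (1 - z * x ^ 2 + z * x ^ 3)) / (x * (1 - x))) := by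
    intro x hx
    obtain ⟨hx0, hx1⟩ := hx
    have hxne : x ≠ 0 := ne_of_gt hx0
    have hx1ne : (1 - x) ≠ 0 := by linarith
    set t : ℝ := z * (x^2 * (1-x)) with ht
    have htb : |t| < 1 := by
      rw [ht, abs_mul]
      have h1 : |x^2*(1-x)| = x^2*(1-x) := abs_of_nonneg (by nlinarith)
      rw [h1]
      calc |z| * (x^2*(1-x)) ≤ |z| * (4/27) := by
            apply mul_le_mul_of_nonneg_left (cube_bound hx0.le hx1.le) (abs_nonneg z)
        _ < 1 := hr
    have hlog := Real.hasSum_pow_div_log_of_abs_lt_one htb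
    have hlog2 := hlog.div_const (x * (1-x))
    have harg : 1 - t = 1 - z * x ^ 2 + z * x ^ 3 := by rw [ht]; ring
    rw [harg] at hlog2
    have heq : (fun i : ℕ => t^(i+1)/((i:ℝ)+1)/(x*(1-x))) = fun n => f n x := by
      funext n
      rw [hf, ht, mul_pow, mul_pow]
      field_simp
      ring
    rwa [heq] at hlog2
  -- integral swap
  have hmeas : ∀ n : ℕ, AEStronglyMeasurable (f n) (volume.restrict (Set.Ioo (0:ℝ) 1)) := by
    intro n
    apply Continuous.aestronglyMeasurable
    continuity
  have hlint : (∑' n : ℕ, ∫⁻ x in Set.Ioo (0:ℝ) 1, ‖f n x‖₊ ∂volume) ≠ ⊤ := by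
    have hb : ∀ n : ℕ, (∫⁻ x in Set.Ioo (0:ℝ) 1, ‖f n x‖₊ ∂volume)
        ≤ ENNReal.ofReal (|z| * (|z| * (4/27)) ^ n) := by
      intro n
      have : (∫⁻ x in Set.Ioo (0:ℝ) 1, ‖f n x‖₊ ∂volume)
          ≤ ∫⁻ _ in Set.Ioo (0:ℝ) 1, ENNReal.ofReal (|z| * (|z| * (4/27)) ^ n) ∂volume := by
        apply MeasureTheory.lintegral_mono_ae
        filter_upwards [MeasureTheory.ae_restrict_mem measurableSet_Ioo] with x hx
        obtain ⟨hx0, hx1⟩ := hx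
        rw [← enorm_eq_nnnorm, ← ofReal_norm]
        apply ENNReal.ofReal_le_ofReal
        rw [hf]
        have h1 : |x| = x := abs_of_nonneg hx0.le
        have h2 : |1 - x| = 1 - x := abs_of_nonneg (by linarith)
        have h3 : |((n:ℝ)+1)| = (n:ℝ)+1 := abs_of_nonneg (by positivity)
        have hnn : (0:ℝ) ≤ x^2*(1-x) := mul_nonneg (pow_nonneg hx0.le 2) (by linarith)
        simp only [norm_div, norm_mul, norm_pow, Real.norm_eq_abs]
        rw [h1, h2, h3]
        have hb2 : x ^ (2*n+1) * (1-x)^n ≤ (4/27)^n := by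
          have h4 : x^(2*n+1) * (1-x)^n = x * (x^2*(1-x))^n := by
            rw [mul_pow, ← pow_mul]; ring
          rw [h4]
          calc x * (x^2*(1-x))^n ≤ 1 * (4/27)^n :=
                mul_le_mul hx1.le (pow_le_pow_left₀ hnn (cube_bound hx0.le hx1.le) n)
                  (pow_nonneg hnn n) zero_le_one
            _ = (4/27)^n := one_mul _
        have hA : 0 ≤ |z|^(n+1) * (x ^ (2*n+1) * (1-x)^n) :=
          mul_nonneg (pow_nonneg (abs_nonneg z) _)
            (mul_nonneg (pow_nonneg hx0.le _) (pow_nonneg (by linarith) _))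
        have hn1 : (1:ℝ) ≤ (n:ℝ)+1 := by have := Nat.cast_nonneg (α := ℝ) n; linarith
        calc |z|^(n+1) * (x ^ (2*n+1) * (1-x)^n) / ((n:ℝ)+1)
            ≤ |z|^(n+1) * (x ^ (2*n+1) * (1-x)^n) := div_le_self hA hn1
          _ ≤ |z|^(n+1) * (4/27)^n :=
              mul_le_mul_of_nonneg_left hb2 (pow_nonneg (abs_nonneg z) _)
          _ = |z| * (|z| * (4/27))^n := by rw [pow_succ, mul_pow]; ring
      calc (∫⁻ x in Set.Ioo (0:ℝ) 1, ‖f n x‖₊ ∂volume)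
          ≤ ∫⁻ _ in Set.Ioo (0:ℝ) 1, ENNReal.ofReal (|z| * (|z| * (4/27)) ^ n) ∂volume := this
        _ = ENNReal.ofReal (|z| * (|z| * (4/27)) ^ n) * volume (Set.Ioo (0:ℝ) 1) :=
            MeasureTheory.setLIntegral_const _ _
        _ ≤ ENNReal.ofReal (|z| * (|z| * (4/27)) ^ n) := by
            rw [Real.volume_Ioo]
            simp
    have hs : Summable (fun n : ℕ => |z| * (|z| * (4/27)) ^ n) :=
      (summable_geometric_of_lt_one hr0 hr).mul_left _
    apply ne_top_of_le_ne_top (b := ENNReal.ofReal (∑' n : ℕ, |z| * (|z| * (4/27)) ^ n))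
      ENNReal.ofReal_ne_top
    calc (∑' n : ℕ, ∫⁻ x in Set.Ioo (0:ℝ) 1, ‖f n x‖₊ ∂volume)
        ≤ ∑' n : ℕ, ENNReal.ofReal (|z| * (|z| * (4/27)) ^ n) := ENNReal.tsum_le_tsum hb
      _ = ENNReal.ofReal (∑' n : ℕ, |z| * (|z| * (4/27)) ^ n) :=
          (ENNReal.ofReal_tsum_of_nonneg (fun n => by positivity) hs).symm
  have hswap : (∫ x in (0:ℝ)..1, (-Real.log (1 - z * x ^ 2 + z * x ^ 3)) / (x * (1 - x)))
      = ∑' n : ℕ, ∫ x in (0:ℝ)..1, f n x := by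
    rw [intervalIntegral.integral_of_le zero_le_one, MeasureTheory.integral_Ioc_eq_integral_Ioo]
    rw [MeasureTheory.setIntegral_congr_fun measurableSet_Ioo
      (fun x hx => ((hsum x hx).tsum_eq).symm)]
    rw [MeasureTheory.integral_tsum hmeas hlint]
    congr 1; ext n
    rw [intervalIntegral.integral_of_le zero_le_one, MeasureTheory.integral_Ioc_eq_integral_Ioo]
  -- term values
  have hterm : ∀ n : ℕ, ∫ x in (0:ℝ)..1, f n x
      = z^(n+1) / ((n:ℝ)+1) * (((2*n+1).factorial * n.factorial : ℝ) / (3*n+2).factorial) := by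
    intro n
    have : (fun x : ℝ => f n x) = fun x : ℝ => (z^(n+1) / ((n:ℝ)+1)) * (x ^ (2*n+1) * (1-x)^n) := by
      ext x; rw [hf]; ring
    rw [this, intervalIntegral.integral_const_mul, beta_nat n (2*n+1)]
    have e : 2*n+1+n+1 = 3*n+2 := by omega
    rw [e]
  -- per-term identity
  have hpt : ∀ n : ℕ, z ^ (n + 1) / (((n:ℝ) + 1) ^ 2 * (Nat.choose (3 * (n + 1)) (n + 1)))
      = (2/3) * (z^(n+1) / ((n:ℝ)+1) * (((2*n+1).factorial * n.factorial : ℝ) / (3*n+2).factorial)) := by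
    intro n
    have hle : n + 1 ≤ 3 * (n+1) := by omega
    have hc : ((Nat.choose (3*(n+1)) (n+1) : ℕ) : ℝ)
        = ((3*(n+1)).factorial : ℝ) / ((n+1).factorial * ((3*(n+1) - (n+1)).factorial)) :=
      Nat.cast_choose ℝ hle
    have e1 : 3*(n+1) - (n+1) = 2*n+2 := by omega
    have e2 : 3*(n+1) = (3*n+2)+1 := by omega
    rw [e1] at hc
    rw [hc, e2]
    rw [Nat.factorial_succ (3*n+2), Nat.factorial_succ (2*n+1), Nat.factorial_succ n]
    have p1 : ((3*n+2).factorial : ℝ) ≠ 0 := by positivity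
    have p2 : ((2*n+1).factorial : ℝ) ≠ 0 := by positivity
    have p3 : ((n).factorial : ℝ) ≠ 0 := by positivity
    have p4 : ((n:ℝ)+1) ≠ 0 := by positivity
    push_cast
    field_simp
    ring
  rw [hswap]
  calc ∑' n : ℕ, z ^ (n + 1) / (((n:ℝ) + 1) ^ 2 * (Nat.choose (3 * (n + 1)) (n + 1)))
      = ∑' n : ℕ, (2/3) * (∫ x in (0:ℝ)..1, f n x) := by
        apply tsum_congr
        intro n
        rw [hterm n, hpt n]
    _ = (2/3) * ∑' n : ℕ, ∫ x in (0:ℝ)..1, f n x := tsum_mul_left
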